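/- For every n ≥ 3, there is no combinatorial magic polygon P(n,2) in which the label z (2i+1) of every midpoint is even. -/

import Mathlib

/-- The labeling function of a combinatorial magic polygon `P(n,2)`:
the `2n` boundary labels `z p` (even positions are vertices, odd positions are
edge midpoints) together with the center label `c`. -/
def magicLabels2 (n : ℕ) (z : ZMod (2 * n) → ℕ) (c : ℕ) : ZMod (2 * n) ⊕ Unit → ℕ :=
  Sum.elim z (fun _ => c)

/-- `(z, c, u)` is a combinatorial magic polygon `P(n,2)`:
(1) the `2n+1` labels are exactly `1, …, 2n+1`, each occurring once;
(2) every side sum `z (2i) + z (2i+1) + z (2i+2)` equals `u`;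
(3) every sum `z p + c + z (p + n)` along a symmetry axis equals `u`. -/
def IsMagicPolygon2 (n : ℕ) (z : ZMod (2 * n) → ℕ) (c u : ℕ) : Prop :=
  Function.Injective (magicLabels2 n z c) ∧
  Set.range (magicLabels2 n z c) = Set.Icc 1 (2 * n + 1) ∧
  (∀ i : ZMod (2 * n), z (2 * i) + z (2 * i + 1) + z (2 * i + 2) = u) ∧
  (∀ p : ZMod (2 * n), z p + c + z (p + (n : ℕ)) = u)

theorem magicPolygon2_no_all_even_midpoints (n : ℕ) (hn : 3 ≤ n) :
    ¬ ∃ (z : ZMod (2 * n) → ℕ) (c u : ℕ),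
      IsMagicPolygon2 n z c u ∧ ∀ i : ZMod (2 * n), Even (z (2 * i + 1)) := by
  rintro ⟨z, c, u, ⟨hinj, hrange, hside, haxis⟩, hmid⟩
  haveI : NeZero (2 * n) := ⟨by omega⟩
  haveI : NeZero n := ⟨by omega⟩
  set f := magicLabels2 n z c with hf
  -- every label lies in [1, 2n+1]
  have hmem : ∀ x, 1 ≤ f x ∧ f x ≤ 2 * n + 1 := by
    intro x
    have : f x ∈ Set.Icc 1 (2 * n + 1) := hrange ▸ Set.mem_range_self x
    exact this
  -- cast injectivity
  have hvinj : ∀ a b : ℕ, a < 2 * n → b < 2 * n →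
      (a : ZMod (2 * n)) = (b : ZMod (2 * n)) → a = b := by
    intro a b ha hb h
    have := congrArg ZMod.val h
    rwa [ZMod.val_cast_of_lt ha, ZMod.val_cast_of_lt hb] at this
  -- midpoint label values
  set e : Fin n → ℕ := fun k => z (((2 * (k : ℕ) + 1 : ℕ) : ZMod (2 * n))) with he
  have heven : ∀ k, Even (e k) := by
    intro k
    have := hmid ((k : ℕ) : ZMod (2 * n))
    have hcast : (2 : ZMod (2*n)) * ((k:ℕ) : ZMod (2*n)) + 1
        = ((2 * (k : ℕ) + 1 : ℕ) : ZMod (2 * n)) := by push_cast; ring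
    rwa [hcast] at this
  have hebd : ∀ k, 2 ≤ e k ∧ e k ≤ 2 * n := by
    intro k
    have h1 : 1 ≤ e k ∧ e k ≤ 2 * n + 1 :=
      hmem (Sum.inl ((2 * (k : ℕ) + 1 : ℕ) : ZMod (2 * n)))
    obtain ⟨m, hm⟩ := heven k
    constructor <;> omega
  have einj : Function.Injective e := by
    intro a b hab
    have : f (Sum.inl ((2 * (a : ℕ) + 1 : ℕ) : ZMod (2 * n)))
        = f (Sum.inl ((2 * (b : ℕ) + 1 : ℕ) : ZMod (2 * n))) := hab
    have h2 := hinj this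
    have h3 : ((2 * (a : ℕ) + 1 : ℕ) : ZMod (2 * n)) = ((2 * (b : ℕ) + 1 : ℕ) : ZMod (2 * n)) := by
      simpa using h2
    have ha := a.isLt; have hb := b.isLt
    have := hvinj _ _ (by omega) (by omega) h3
    exact Fin.ext (by omega)
  -- the map k ↦ e k / 2 - 1 is a bijection of Fin n
  set g : Fin n → Fin n := fun k => ⟨e k / 2 - 1, by have := hebd k; omega⟩ with hg
  have ginj : Function.Injective g := by
    intro a b hab
    apply einj
    have hab' : e a / 2 - 1 = e b / 2 - 1 := congrArg Fin.val hab
    have ha := hebd a; have hb := hebd b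
    obtain ⟨x, hx⟩ := heven a; obtain ⟨y, hy⟩ := heven b
    omega
  have gsurj : Function.Surjective g := Finite.injective_iff_surjective.mp ginj
  have gbij : Function.Bijective g := ⟨ginj, gsurj⟩
  -- every even number in [1, 2n+1] is a midpoint label
  have hsurj_even : ∀ w : ℕ, Even w → 1 ≤ w → w ≤ 2 * n + 1 → ∃ k, e k = w := by
    intro w hw h1 h2
    obtain ⟨j, hj⟩ := hw
    obtain ⟨k, hk⟩ := gsurj ⟨j - 1, by omega⟩
    refine ⟨k, ?_⟩
    have hk' : e k / 2 - 1 = j - 1 := congrArg Fin.val hk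
    have := hebd k
    obtain ⟨x, hx⟩ := heven k
    omega
  -- parities: all non-midpoint labels are odd
  have h2dvd : (2 : ℕ) ∣ 2 * n := ⟨n, rfl⟩
  set φ : ZMod (2 * n) →+* ZMod 2 := ZMod.castHom h2dvd (ZMod 2) with hφ
  have hφmid : ∀ k : Fin n, φ (((2 * (k : ℕ) + 1 : ℕ) : ZMod (2 * n))) = 1 := by
    intro k
    rw [map_natCast]
    push_cast
    have : (2 : ZMod 2) = 0 := rfl
    rw [this]; ring
  have hoddlabel : ∀ p : ZMod (2 * n), φ p = 0 → Odd (z p) := by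
    intro p hp
    rw [← Nat.not_even_iff_odd]
    intro hzp
    have h1 := hmem (Sum.inl p)
    simp only [hf, magicLabels2, Sum.elim_inl] at h1
    obtain ⟨k, hk⟩ := hsurj_even (z p) hzp h1.1 h1.2
    have : f (Sum.inl ((2 * (k : ℕ) + 1 : ℕ) : ZMod (2 * n))) = f (Sum.inl p) := hk
    have h2 := hinj this
    have h3 : ((2 * (k : ℕ) + 1 : ℕ) : ZMod (2 * n)) = p := by simpa using h2
    rw [← h3, hφmid k] at hp
    exact one_ne_zero hp
  have hcodd : Odd c := by
    rw [← Nat.not_even_iff_odd]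
    intro hc
    have h1 := hmem (Sum.inr ())
    simp only [hf, magicLabels2, Sum.elim_inr] at h1
    obtain ⟨k, hk⟩ := hsurj_even c hc h1.1 h1.2
    have : f (Sum.inl ((2 * (k : ℕ) + 1 : ℕ) : ZMod (2 * n))) = f (Sum.inr ()) := hk
    exact absurd (hinj this) (by simp)
  -- sums
  set S : ℕ := ∑ p : ZMod (2 * n), z p with hS
  set E : ℕ := ∑ k : Fin n, z (((2 * (k : ℕ) : ℕ) : ZMod (2 * n))) with hE
  set M : ℕ := ∑ k : Fin n, e k with hM
  -- total sum
  have htot : S + c = (2 * n + 1) * (n + 1) := by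
    have hsum : ∑ x : ZMod (2 * n) ⊕ Unit, f x = ∑ i ∈ Finset.Icc 1 (2 * n + 1), i := by
      apply Finset.sum_bij (fun a _ => f a)
      · intro a _
        have := hmem a
        simp [Finset.mem_Icc]; omega
      · intro a _ b _ h
        exact hinj h
      · intro b hb
        have : b ∈ Set.range f := by
          rw [hrange]; simp [Finset.mem_Icc] at hb; exact ⟨hb.1, hb.2⟩
        obtain ⟨a, ha⟩ := this
        exact ⟨a, Finset.mem_univ a, ha⟩
      · intro a _; rfl
    rw [Fintype.sum_sum_type] at hsum
    have h1 : ∑ a₂ : Unit, f (Sum.inr a₂) = c := by simp [hf, magicLabels2]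
    have h2 : ∑ p : ZMod (2 * n), f (Sum.inl p) = S := by simp [hf, magicLabels2, hS]
    have h3 : ∑ i ∈ Finset.Icc 1 (2 * n + 1), i = (2 * n + 1) * (n + 1) := by
      have hins : Finset.range (2 * n + 2) = insert 0 (Finset.Icc 1 (2 * n + 1)) := by
        ext x; simp [Finset.mem_Icc, Finset.mem_range]; omega
      have hgauss := Finset.sum_range_id_mul_two (2 * n + 2)
      rw [hins, Finset.sum_insert (by simp)] at hgauss
      have hrhs : (2 * n + 2) * (2 * n + 2 - 1) = 2 * ((2 * n + 1) * (n + 1)) := by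
        have h21 : 2 * n + 2 - 1 = 2 * n + 1 := by omega
        rw [h21]; ring
      omega
    rw [h1, h2, h3] at hsum
    exact hsum
  -- S = E + M
  have hEM : E + M = S := by
    set b : Fin n ⊕ Fin n → ZMod (2 * n) :=
      Sum.elim (fun k => ((2 * (k : ℕ) : ℕ) : ZMod (2 * n)))
        (fun k => ((2 * (k : ℕ) + 1 : ℕ) : ZMod (2 * n))) with hb
    have binj : Function.Injective b := by
      rintro (a | a) (x | x) h <;> simp only [hb, Sum.elim_inl, Sum.elim_inr] at h
      · have := hvinj _ _ (by omega) (by omega) h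
        exact congrArg Sum.inl (Fin.ext (by omega))
      · have := hvinj _ _ (by omega) (by omega) h; omega
      · have := hvinj _ _ (by omega) (by omega) h; omega
      · have := hvinj _ _ (by omega) (by omega) h
        exact congrArg Sum.inr (Fin.ext (by omega))
    have bbij : Function.Bijective b := by
      rw [Fintype.bijective_iff_injective_and_card]
      refine ⟨binj, ?_⟩
      simp [ZMod.card]; ring
    have := Fintype.sum_bijective b bbij (fun x => z (b x)) z (fun x => rfl)
    rw [Fintype.sum_sum_type] at this
    simpa [hb, hE, hM, he, hS] using this
  -- shift identity for the third vertex in a side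
  have hshiftcast : ∀ k : Fin n,
      ((2 * ((k + 1 : Fin n) : ℕ) : ℕ) : ZMod (2 * n)) = ((2 * (k : ℕ) + 2 : ℕ) : ZMod (2 * n)) := by
    intro k
    have hval : ((k + 1 : Fin n) : ℕ) = ((k : ℕ) + 1) % n := by
      simp [Fin.add_def]
    rw [hval]
    have hnat : 2 * (((k : ℕ) + 1) % n) + 2 * n * (((k : ℕ) + 1) / n) = 2 * ((k : ℕ) + 1) := by
      have := Nat.mod_add_div ((k : ℕ) + 1) n
      nlinarith [this]
    have hc := congrArg (fun m : ℕ => (m : ZMod (2 * n))) hnat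
    have h0 : (2 : ZMod (2 * n)) * ((n : ℕ) : ZMod (2 * n)) = 0 := by
      have := ZMod.natCast_self (2 * n)
      push_cast at this
      exact this
    push_cast at hc ⊢
    linear_combination hc - ((((k : ℕ) + 1) / n : ℕ) : ZMod (2 * n)) * h0
  -- side sums: 2E + M = n*u
  have hsides : 2 * E + M = n * u := by
    have h1 : ∀ k : Fin n, z (((2 * (k : ℕ) : ℕ) : ZMod (2 * n)))
        + e k + z (((2 * (k : ℕ) + 2 : ℕ) : ZMod (2 * n))) = u := by
      intro k
      have := hside ((k : ℕ) : ZMod (2 * n))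
      have c1 : (2 : ZMod (2*n)) * ((k:ℕ) : ZMod (2*n)) = ((2 * (k : ℕ) : ℕ) : ZMod (2 * n)) := by
        push_cast; ring
      have c2 : ((2 * (k : ℕ) : ℕ) : ZMod (2 * n)) + 1 = ((2 * (k : ℕ) + 1 : ℕ) : ZMod (2 * n)) := by
        push_cast; ring
      have c3 : ((2 * (k : ℕ) : ℕ) : ZMod (2 * n)) + 2 = ((2 * (k : ℕ) + 2 : ℕ) : ZMod (2 * n)) := by
        push_cast; ring
      rw [c1, c2, c3] at this
      exact this
    have h2 : ∑ k : Fin n, (z (((2 * (k : ℕ) : ℕ) : ZMod (2 * n)))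
        + e k + z (((2 * (k : ℕ) + 2 : ℕ) : ZMod (2 * n)))) = n * u := by
      rw [Finset.sum_congr rfl (fun k _ => h1 k)]
      simp [Finset.card_univ, mul_comm]
    rw [Finset.sum_add_distrib, Finset.sum_add_distrib] at h2
    have h3 : ∑ k : Fin n, z (((2 * (k : ℕ) + 2 : ℕ) : ZMod (2 * n))) = E := by
      rw [hE]
      apply Fintype.sum_equiv (Equiv.addRight (1 : Fin n))
      intro k
      simp only [Equiv.coe_addRight]
      rw [← hshiftcast k]
    rw [h3, ← hE, ← hM] at h2
    omega
  -- axis sums: S + n*c = n*u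
  have haxes : S + n * c = n * u := by
    have h1 : ∑ p : ZMod (2 * n), (z p + c + z (p + (n : ℕ))) = 2 * n * u := by
      rw [Finset.sum_congr rfl (fun p _ => haxis p)]
      simp [Finset.card_univ, ZMod.card, mul_comm, mul_assoc]
    rw [Finset.sum_add_distrib, Finset.sum_add_distrib] at h1
    have h2 : ∑ p : ZMod (2 * n), z (p + (n : ℕ)) = S := by
      rw [hS]
      exact Fintype.sum_equiv (Equiv.addRight ((n : ℕ) : ZMod (2 * n))) _ _ (fun p => rfl)
    have h3 : ∑ _p : ZMod (2 * n), c = 2 * n * c := by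
      simp [Finset.card_univ, ZMod.card, mul_comm, mul_assoc]
    rw [h2, h3, ← hS] at h1
    have : 2 * (S + n * c) = 2 * (n * u) := by ring_nf; ring_nf at h1; linarith
    omega
  -- M = n*(n+1)
  have hMval : M = n * (n + 1) := by
    have h1 : ∀ k, e k = 2 * ((g k : ℕ) + 1) := by
      intro k
      have := hebd k
      obtain ⟨x, hx⟩ := heven k
      simp only [hg]
      omega
    have h2 : M = ∑ k : Fin n, 2 * ((g k : ℕ) + 1) := by
      rw [hM]; exact Finset.sum_congr rfl (fun k _ => h1 k)
    have h3 : ∑ k : Fin n, ((g k : ℕ)) = ∑ j : Fin n, (j : ℕ) :=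
      Fintype.sum_bijective g gbij _ _ (fun x => rfl)
    have h4 : (∑ j : Fin n, (j : ℕ)) * 2 = n * (n - 1) := by
      rw [Fin.sum_univ_eq_sum_range (fun i => i) n]
      exact Finset.sum_range_id_mul_two n
    have h5 : M = 2 * (∑ k : Fin n, ((g k : ℕ))) + 2 * n := by
      have hterm : ∀ k : Fin n, 2 * ((g k : ℕ) + 1) = 2 * (g k : ℕ) + 2 := fun k => by ring
      rw [h2, Finset.sum_congr rfl (fun k _ => hterm k), Finset.sum_add_distrib,
        ← Finset.mul_sum]
      simp [Finset.card_univ, mul_comm]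
    have h6 : n * (n - 1) + 2 * n = n * (n + 1) := by
      cases n with
      | zero => omega
      | succ m => simp [Nat.succ_sub_one]; ring
    omega
  -- conclude c = n + 1
  have hcval : c = n + 1 := by
    have h1 : E = n * c := by omega
    have key : n * c + n * (n + 1) + c = (2 * n + 1) * (n + 1) := by omega
    have expand : (2 * n + 1) * (n + 1) = n * (n + 1) + (n + 1) * (n + 1) := by ring
    have hnc : (n + 1) * c = n * c + c := by ring
    have h2 : (n + 1) * c = (n + 1) * (n + 1) := by omega
    exact Nat.eq_of_mul_eq_mul_left (by omega) h2
  -- n is even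
  obtain ⟨t, ht⟩ := hcodd
  have hneven : ∃ m, n = 2 * m := ⟨t, by omega⟩
  obtain ⟨m, hm⟩ := hneven
  -- u = 3n + 3, odd
  have huval : u = 3 * n + 3 := by
    have h1 : E = n * c := by omega
    have h2 : n * u = n * (3 * n + 3) := by
      rw [← hsides, hMval, h1, hcval]; ring
    exact Nat.eq_of_mul_eq_mul_left (by omega) h2
  -- final parity contradiction at side 0
  have hs0 := hside 0
  have hz0 : Odd (z 0) := hoddlabel 0 (map_zero φ)
  have hz2 : Odd (z 2) := by
    apply hoddlabel
    have h22 : ((2 : ℕ) : ZMod (2 * n)) = (2 : ZMod (2 * n)) := by push_cast; ring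
    rw [← h22, map_natCast]
    decide
  have hz1 : Even (z 1) := by
    have := hmid 0
    simpa using this
  simp only [mul_zero, zero_add] at hs0
  obtain ⟨a, ha⟩ := hz0
  obtain ⟨b2, hb2⟩ := hz1
  obtain ⟨d, hd⟩ := hz2
  omega
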